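/- Let m ≥ 1. For every deterministic online fractional algorithm A there exist a finite list L of nonempty traces over Fin m and an index j* ∈ Fin m such that j* ∈ T for every trace T in L (so the single set indexed by j*, with cost 1, is an offline feasible cover), and the unweighted cost of A on L satisfies ∑_j A(L)_j ≥ H_m. In other words, every online algorithm is at least H_m-competitive on some instance whose offline optimum is 1. -/

import Mathlib

/-- The `n`-th harmonic number `H_n = ∑_{k=1}^n 1/k` (with `H_0 = 0`). -/
noncomputable def harm (n : ℕ) : ℝ := ∑ k ∈ Finset.range n, (1 : ℝ) / (k + 1)

lemma harm_succ (n : ℕ) : harm (n + 1) = harm n + 1 / (n + 1) := by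
  simp [harm, Finset.sum_range_succ]

lemma aux_lower (m : ℕ)
    (A : List (Finset (Fin m)) → Fin m → ℝ)
    (hmono : ∀ L L' : List (Finset (Fin m)), L <+: L' → ∀ j, A L j ≤ A L' j)
    (hfeas : ∀ L : List (Finset (Fin m)), (∀ T ∈ L, T.Nonempty) →
      ∀ T ∈ L, 1 ≤ ∑ j ∈ T, A L j) :
    ∀ n : ℕ, ∀ S : Finset (Fin m), S.card = n + 1 →
      ∀ L0 : List (Finset (Fin m)), (∀ T ∈ L0, T.Nonempty) →
      ∃ (L' : List (Finset (Fin m))) (jstar : Fin m),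
        L' ≠ [] ∧ (∀ T ∈ L', T.Nonempty) ∧ (∀ T ∈ L', jstar ∈ T) ∧ jstar ∈ S ∧
        harm (n + 1) ≤ ∑ j ∈ S, A (L0 ++ L') j := by
  intro n
  induction n with
  | zero =>
    intro S hcard L0 hL0
    have hSne : S.Nonempty := Finset.card_pos.mp (by omega)
    have hall : ∀ T ∈ L0 ++ [S], T.Nonempty := by
      intro T hT
      rcases List.mem_append.mp hT with h | h
      · exact hL0 T h
      · simp at h; subst h; exact hSne
    have hf := hfeas (L0 ++ [S]) hall S (by simp)
    obtain ⟨j, hj⟩ := Finset.card_eq_one.mp hcard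
    refine ⟨[S], j, by simp, ?_, ?_, ?_, ?_⟩
    · intro T hT; simp at hT; subst hT; exact hSne
    · intro T hT; simp at hT; subst hT; simp [hj]
    · simp [hj]
    · have : harm 1 = 1 := by simp [harm]
      rw [this]
      exact hf
  | succ n ih =>
    intro S hcard L0 hL0
    have hSne : S.Nonempty := Finset.card_pos.mp (by omega)
    have hall : ∀ T ∈ L0 ++ [S], T.Nonempty := by
      intro T hT
      rcases List.mem_append.mp hT with h | h
      · exact hL0 T h
      · simp at h; subst h; exact hSne
    have hf := hfeas (L0 ++ [S]) hall S (by simp)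
    -- find an element with value ≥ 1 / (n+2)
    have hcardR : ((n : ℝ) + 2) ≠ 0 := by positivity
    have hsum_const : ∑ _j ∈ S, (1 : ℝ) / (n + 2) = 1 := by
      rw [Finset.sum_const, hcard]
      push_cast
      field_simp
      ring_nf
      field_simp
      ring
    have hle : ∑ _j ∈ S, (1 : ℝ) / (n + 2) ≤ ∑ j ∈ S, A (L0 ++ [S]) j := by
      rw [hsum_const]; exact hf
    obtain ⟨jmx, hjmxS, hjmx⟩ := Finset.exists_le_of_sum_le hSne hle
    set S' := S.erase jmx with hS'
    have hcard' : S'.card = n + 1 := by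
      rw [hS', Finset.card_erase_of_mem hjmxS, hcard]; omega
    obtain ⟨L'', jstar, hne, hne', hmem', hjstar, hsum⟩ :=
      ih S' hcard' (L0 ++ [S]) hall
    have hjstarS : jstar ∈ S := Finset.mem_of_mem_erase hjstar
    refine ⟨S :: L'', jstar, by simp, ?_, ?_, hjstarS, ?_⟩
    · intro T hT
      rcases List.mem_cons.mp hT with h | h
      · subst h; exact hSne
      · exact hne' T h
    · intro T hT
      rcases List.mem_cons.mp hT with h | h
      · subst h; exact hjstarS
      · exact hmem' T h
    · have hLeq : L0 ++ S :: L'' = (L0 ++ [S]) ++ L'' := by simp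
      rw [hLeq]
      have hsplit : ∑ j ∈ S, A ((L0 ++ [S]) ++ L'') j
          = A ((L0 ++ [S]) ++ L'') jmx + ∑ j ∈ S', A ((L0 ++ [S]) ++ L'') j := by
        rw [hS', Finset.add_sum_erase _ _ hjmxS]
      rw [hsplit, harm_succ]
      have hmx : (1 : ℝ) / (n + 2) ≤ A ((L0 ++ [S]) ++ L'') jmx :=
        le_trans hjmx (hmono _ _ (List.prefix_append _ _) jmx)
      have : ((n : ℝ) + 1 + 1) = (n : ℝ) + 2 := by ring
      push_cast
      rw [this]
      linarith

theorem online_lower_bound (m : ℕ) (hm : 1 ≤ m)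
    (A : List (Finset (Fin m)) → Fin m → ℝ)
    (hpos : ∀ L j, 0 ≤ A L j)
    (hmono : ∀ L L' : List (Finset (Fin m)), L <+: L' → ∀ j, A L j ≤ A L' j)
    (hfeas : ∀ L : List (Finset (Fin m)), (∀ T ∈ L, T.Nonempty) →
      ∀ T ∈ L, 1 ≤ ∑ j ∈ T, A L j) :
    ∃ (L : List (Finset (Fin m))) (jstar : Fin m),
      L ≠ [] ∧ (∀ T ∈ L, T.Nonempty) ∧ (∀ T ∈ L, jstar ∈ T) ∧
      harm m ≤ ∑ j, A L j := by
  obtain ⟨n, hn⟩ : ∃ n, m = n + 1 := ⟨m - 1, by omega⟩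
  obtain ⟨L', jstar, h1, h2, h3, _, h5⟩ :=
    aux_lower m A hmono hfeas n Finset.univ (by simp [hn]) [] (by simp)
  exact ⟨L', jstar, h1, h2, h3, by simpa [hn] using h5⟩
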